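/- Let n ≥ 1 and let Δ = 2^[n] be the full simplex, so Δ̄ is the set of all nonempty subsets of [n]. A point x ∈ ℝ^Δ̄ lies in GCut(2^[n]) if and only if Σ_{∅ ≠ F ⊆ [n]} x_F ≤ 2^(n−1) and, for every nonempty S ⊆ [n], Σ_{∅ ≠ F ⊆ [n]} (−1)^(#(F ∩ S)) x_F ≤ 0. -/

import Mathlib

open Finset
open scoped symmDiff

/-- The nonempty faces of the full simplex `2^[n]`: all nonempty subsets of `[n]`. -/
abbrev SimplexFace (n : ℕ) : Type := {F : Finset (Fin n) // F.Nonempty}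

/-- The vertex `d^S` of `GCut(2^[n])`. -/
noncomputable def dvecS (n : ℕ) (S : Finset (Fin n)) : SimplexFace n → ℝ :=
  fun F => if Odd ((F.val ∩ S).card) then 1 else 0

variable {n : ℕ}

/-- character -/
noncomputable def chi (T F : Finset (Fin n)) : ℝ := (-1) ^ ((F ∩ T).card)

lemma chi_comm (T F : Finset (Fin n)) : chi T F = chi F T := by
  unfold chi; rw [Finset.inter_comm]

lemma chi_empty_right (T : Finset (Fin n)) : chi T ∅ = 1 := by
  simp [chi]

lemma card_symmDiff' (A B : Finset (Fin n)) :
    A.card + B.card = (A ∆ B).card + 2 * (A ∩ B).card := by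
  have hd : A ∆ B = (A \ B) ∪ (B \ A) := symmDiff_def A B
  rw [hd, Finset.card_union_of_disjoint (disjoint_sdiff_sdiff)]
  have h1 := Finset.card_sdiff_add_card_inter A B
  have h2 := Finset.card_sdiff_add_card_inter B A
  rw [Finset.inter_comm B A] at h2
  omega

lemma chi_mul (T S F : Finset (Fin n)) : chi T F * chi S F = chi (T ∆ S) F := by
  unfold chi
  rw [← pow_add]
  have hd : F ∩ (T ∆ S) = (F ∩ T) ∆ (F ∩ S) := inf_symmDiff_distrib_left F T S
  rw [hd]
  rw [neg_one_pow_eq_pow_mod_two, neg_one_pow_eq_pow_mod_two ((F ∩ T) ∆ (F ∩ S)).card]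
  congr 1
  have := card_symmDiff' (F ∩ T) (F ∩ S)
  omega

lemma chi_sum (T : Finset (Fin n)) :
    ∑ F : Finset (Fin n), chi T F = if T = ∅ then (2:ℝ)^n else 0 := by
  have key := Finset.prod_add (fun i => if i ∈ T then (-1:ℝ) else 1) (fun _ => (1:ℝ))
    (univ : Finset (Fin n))
  simp only [Finset.prod_const_one, mul_one] at key
  have hR : ∀ t : Finset (Fin n), (∏ i ∈ t, if i ∈ T then (-1:ℝ) else 1) = chi T t := by
    intro t
    rw [← Finset.prod_filter, Finset.filter_mem_eq_inter]
    simp [chi, Finset.inter_comm]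
  rw [Finset.sum_congr rfl (fun t _ => hR t)] at key
  have huniv : (univ : Finset (Fin n)).powerset = (univ : Finset (Finset (Fin n))) := by
    ext t; simp
  rw [huniv] at key
  rw [← key]
  by_cases hT : T = ∅
  · subst hT; norm_num
  · rw [if_neg hT]
    obtain ⟨i, hi⟩ := Finset.nonempty_iff_ne_empty.mpr hT
    exact Finset.prod_eq_zero (Finset.mem_univ i) (by simp [hi])

lemma chi_orth (T S : Finset (Fin n)) :
    ∑ F : Finset (Fin n), chi T F * chi S F = if T = S then (2:ℝ)^n else 0 := by
  simp_rw [chi_mul]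
  rw [chi_sum]
  congr 1
  simp [symmDiff_eq_bot]

lemma sum_face (h : Finset (Fin n) → ℝ) :
    ∑ F : SimplexFace n, h F.val = ∑ F : Finset (Fin n), h F - h ∅ := by
  rw [← Finset.sum_erase_eq_sub (Finset.mem_univ (∅ : Finset (Fin n)))]
  rw [← Finset.sum_subtype ((univ : Finset (Finset (Fin n))).erase ∅)
    (by intro F; simp [Finset.nonempty_iff_ne_empty]) h]

lemma dvec_eq (S : Finset (Fin n)) (F : SimplexFace n) :
    dvecS n S F = (1 - chi S F.val) / 2 := by
  unfold dvecS chi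
  rcases Nat.even_or_odd ((F.val ∩ S).card) with h | h
  · rw [if_neg (by simpa using Nat.not_odd_iff_even.mpr h), h.neg_one_pow]
    norm_num
  · rw [if_pos h, h.neg_one_pow]
    norm_num

/-- extension of `x` by `0` at `∅` -/
noncomputable def xExt (x : SimplexFace n → ℝ) : Finset (Fin n) → ℝ :=
  fun F => if h : F.Nonempty then x ⟨F, h⟩ else 0

lemma xExt_empty (x : SimplexFace n → ℝ) : xExt x ∅ = 0 := by
  simp [xExt]

lemma xExt_face (x : SimplexFace n → ℝ) (F : SimplexFace n) : xExt x F.val = x F := by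
  simp [xExt, F.2]

/-- the barycentric weights -/
noncomputable def wgt (x : SimplexFace n → ℝ) (S : Finset (Fin n)) : ℝ :=
  (∑ F : Finset (Fin n), chi S F * (1 - 2 * xExt x F)) / 2 ^ n

lemma swap_eval (y : Finset (Fin n) → ℝ) (G₀ : Finset (Fin n)) :
    ∑ S : Finset (Fin n), chi S G₀ * (∑ G, chi S G * y G) = y G₀ * 2 ^ n := by
  simp_rw [Finset.mul_sum]
  rw [Finset.sum_comm]
  have h1 : ∀ G : Finset (Fin n),
      ∑ S : Finset (Fin n), chi S G₀ * (chi S G * y G)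
        = (if G₀ = G then (2:ℝ)^n else 0) * y G := by
    intro G
    rw [← chi_orth G₀ G, Finset.sum_mul]
    refine Finset.sum_congr rfl fun S _ => ?_
    rw [chi_comm S G₀, chi_comm S G]
    ring
  rw [Finset.sum_congr rfl fun G _ => h1 G]
  simp [Finset.sum_ite_eq, ite_mul, mul_comm]

lemma wgt_sum (x : SimplexFace n → ℝ) : ∑ S : Finset (Fin n), wgt x S = 1 := by
  unfold wgt
  rw [← Finset.sum_div]
  rw [Finset.sum_comm]
  have h1 : ∀ G : Finset (Fin n),
      ∑ S : Finset (Fin n), chi S G * (1 - 2 * xExt x G)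
        = (if G = ∅ then (2:ℝ)^n else 0) * (1 - 2 * xExt x G) := by
    intro G
    rw [← chi_sum G, Finset.sum_mul]
    exact Finset.sum_congr rfl fun S _ => by rw [chi_comm]
  rw [Finset.sum_congr rfl fun G _ => h1 G]
  simp only [ite_mul, zero_mul, Finset.sum_ite_eq', Finset.mem_univ, if_true, xExt_empty]
  have h2 : (2:ℝ)^n ≠ 0 := by positivity
  field_simp
  norm_num

lemma wgt_comb (x : SimplexFace n → ℝ) :
    ∑ S : Finset (Fin n), wgt x S • dvecS n S = x := by
  funext F₀
  rw [Finset.sum_apply]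
  simp only [Pi.smul_apply, smul_eq_mul]
  have h1 : ∀ S : Finset (Fin n), wgt x S * dvecS n S F₀
      = wgt x S / 2 - (chi S F₀.val * (∑ G, chi S G * (1 - 2 * xExt x G))) / (2^n) / 2 := by
    intro S
    rw [dvec_eq]
    unfold wgt
    ring
  rw [Finset.sum_congr rfl fun S _ => h1 S]
  rw [Finset.sum_sub_distrib, ← Finset.sum_div, wgt_sum, ← Finset.sum_div, ← Finset.sum_div,
    swap_eval (fun G => 1 - 2 * xExt x G) F₀.val]
  rw [xExt_face]
  have h2 : (2:ℝ)^n ≠ 0 := by positivity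
  field_simp
  ring

lemma wgt_eq (x : SimplexFace n → ℝ) (S : Finset (Fin n)) :
    wgt x S * 2 ^ n
      = (if S = ∅ then (2:ℝ)^n else 0) - 2 * ∑ F : SimplexFace n, chi S F.val * x F := by
  unfold wgt
  have h2 : (2:ℝ)^n ≠ 0 := by positivity
  rw [div_mul_cancel₀ _ h2]
  have hface := sum_face (fun F => chi S F * xExt x F)
  rw [chi_empty_right, xExt_empty, mul_zero, sub_zero] at hface
  have hface' : ∑ F : SimplexFace n, chi S F.val * x F
      = ∑ F : Finset (Fin n), chi S F * xExt x F := by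
    rw [← hface]; exact Finset.sum_congr rfl fun F _ => by rw [xExt_face]
  rw [hface', ← chi_sum S, Finset.mul_sum, ← Finset.sum_sub_distrib]
  exact Finset.sum_congr rfl fun F _ => by ring

theorem stmt_7 (n : ℕ) (hn : 1 ≤ n) (x : SimplexFace n → ℝ) :
    x ∈ convexHull ℝ (Set.range (dvecS n)) ↔
      (∑ F : SimplexFace n, x F ≤ 2 ^ (n - 1)) ∧
      (∀ S : Finset (Fin n), S.Nonempty →
        ∑ F : SimplexFace n, (-1 : ℝ) ^ ((F.val ∩ S).card) * x F ≤ 0) := by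
  have h2n : (2:ℝ)^n = 2 * 2^(n-1) := by
    conv_lhs => rw [show n = (n-1) + 1 by omega]
    ring
  have h2pos : (0:ℝ) < 2^n := by positivity
  constructor
  · intro hx
    have hsub : Set.range (dvecS n) ⊆
        {y : SimplexFace n → ℝ | (∑ F : SimplexFace n, y F ≤ 2 ^ (n - 1)) ∧
          (∀ S : Finset (Fin n), S.Nonempty →
            ∑ F : SimplexFace n, (-1 : ℝ) ^ ((F.val ∩ S).card) * y F ≤ 0)} := by
      rintro _ ⟨S, rfl⟩
      constructor
      · have := sum_face (fun F => (1 - chi S F) / 2)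
        rw [chi_empty_right] at this
        calc ∑ F : SimplexFace n, dvecS n S F
            = ∑ F : SimplexFace n, (1 - chi S F.val) / 2 :=
              Finset.sum_congr rfl fun F _ => dvec_eq S F
          _ = ∑ F : Finset (Fin n), (1 - chi S F) / 2 - (1 - 1) / 2 := this
          _ = ((2:ℝ)^n - (if S = ∅ then (2:ℝ)^n else 0)) / 2 := by
              rw [← Finset.sum_div, Finset.sum_sub_distrib, chi_sum, Finset.sum_const,
                Finset.card_univ, Fintype.card_finset, Fintype.card_fin]
              push_cast
              ring
          _ ≤ 2 ^ (n - 1) := by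
              by_cases hS : S = ∅ <;> simp [hS] <;> nlinarith [pow_pos (by norm_num : (0:ℝ) < 2) (n-1)]
      · intro T hT
        have hchi : ∀ F : SimplexFace n, (-1:ℝ) ^ ((F.val ∩ T).card) = chi T F.val := fun F => rfl
        have := sum_face (fun F => chi T F * ((1 - chi S F) / 2))
        rw [chi_empty_right] at this
        calc ∑ F : SimplexFace n, (-1:ℝ) ^ ((F.val ∩ T).card) * dvecS n S F
            = ∑ F : SimplexFace n, chi T F.val * ((1 - chi S F.val) / 2) := by
              refine Finset.sum_congr rfl fun F _ => ?_
              rw [hchi, dvec_eq]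
          _ = ∑ F : Finset (Fin n), chi T F * ((1 - chi S F) / 2) - 1 * ((1 - chi S ∅) / 2) :=
              this
          _ = ((∑ F : Finset (Fin n), chi T F) - ∑ F : Finset (Fin n), chi T F * chi S F) / 2 := by
              rw [chi_empty_right,
                Finset.sum_congr rfl fun F (_ : F ∈ univ) =>
                  (show chi T F * ((1 - chi S F) / 2) = (chi T F - chi T F * chi S F)/2 by ring),
                ← Finset.sum_div, Finset.sum_sub_distrib]
              norm_num
          _ ≤ 0 := by
              rw [chi_sum, chi_orth, if_neg (Finset.nonempty_iff_ne_empty.mp hT)]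
              by_cases h : T = S <;> simp [h] <;> linarith
    have hconv : Convex ℝ {y : SimplexFace n → ℝ | (∑ F : SimplexFace n, y F ≤ 2 ^ (n - 1)) ∧
          (∀ S : Finset (Fin n), S.Nonempty →
            ∑ F : SimplexFace n, (-1 : ℝ) ^ ((F.val ∩ S).card) * y F ≤ 0)} := by
      have hA : Convex ℝ {y : SimplexFace n → ℝ | ∑ F : SimplexFace n, y F ≤ (2:ℝ) ^ (n - 1)} :=
        convex_halfSpace_le ⟨fun a b => by simp [Finset.sum_add_distrib],
          fun c y => by simp [Finset.mul_sum]⟩ _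
      have hB : Convex ℝ {y : SimplexFace n → ℝ | ∀ S : Finset (Fin n), S.Nonempty →
          ∑ F : SimplexFace n, (-1 : ℝ) ^ ((F.val ∩ S).card) * y F ≤ 0} := by
        have : {y : SimplexFace n → ℝ | ∀ S : Finset (Fin n), S.Nonempty →
            ∑ F : SimplexFace n, (-1 : ℝ) ^ ((F.val ∩ S).card) * y F ≤ 0}
            = ⋂ S : Finset (Fin n), {y : SimplexFace n → ℝ | S.Nonempty →
              ∑ F : SimplexFace n, (-1 : ℝ) ^ ((F.val ∩ S).card) * y F ≤ 0} := by
          ext y; simp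
        rw [this]
        refine convex_iInter fun S => ?_
        by_cases hS : S.Nonempty
        · have : {y : SimplexFace n → ℝ | S.Nonempty →
              ∑ F : SimplexFace n, (-1 : ℝ) ^ ((F.val ∩ S).card) * y F ≤ 0}
              = {y : SimplexFace n → ℝ |
              ∑ F : SimplexFace n, (-1 : ℝ) ^ ((F.val ∩ S).card) * y F ≤ 0} := by
            ext y; simp [hS]
          rw [this]
          exact convex_halfSpace_le ⟨fun a b => by
              simp [mul_add, Finset.sum_add_distrib],
            fun c y => by
              simp only [Pi.smul_apply, smul_eq_mul, Finset.mul_sum]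
              exact Finset.sum_congr rfl fun F _ => by ring⟩ _
        · have : {y : SimplexFace n → ℝ | S.Nonempty →
              ∑ F : SimplexFace n, (-1 : ℝ) ^ ((F.val ∩ S).card) * y F ≤ 0} = Set.univ := by
            ext y; simp [hS]
          rw [this]; exact convex_univ
      exact hA.inter hB
    exact convexHull_min hsub hconv hx
  · rintro ⟨h1, h2⟩
    have hchi : ∀ (S : Finset (Fin n)) (F : SimplexFace n),
        (-1:ℝ) ^ ((F.val ∩ S).card) = chi S F.val := fun _ _ => rfl
    have hw0 : ∀ S : Finset (Fin n), 0 ≤ wgt x S := by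
      intro S
      have he := wgt_eq x S
      by_cases hS : S = ∅
      · rw [if_pos hS] at he
        have hx1 : ∑ F : SimplexFace n, chi S F.val * x F = ∑ F : SimplexFace n, x F := by
          refine Finset.sum_congr rfl fun F _ => ?_
          rw [hS]
          simp [chi]
        rw [hx1] at he
        nlinarith
      · rw [if_neg hS] at he
        have := h2 S (Finset.nonempty_iff_ne_empty.mpr hS)
        simp_rw [hchi] at this
        nlinarith
    have hmem : x = Finset.univ.centerMass (wgt x) (dvecS n) := by
      rw [Finset.centerMass_eq_of_sum_1 _ _ (wgt_sum x), wgt_comb]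
    rw [hmem]
    exact Finset.centerMass_mem_convexHull _ (fun S _ => hw0 S)
      (by rw [wgt_sum]; norm_num) (fun S _ => Set.mem_range_self S)
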